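/- The function S(ω) = 8π·e^{5ω/2}·D(e^{2ω}), defined for all real ω, is even: S(−ω) = S(ω) for every ω ∈ ℝ. -/

import Mathlib

open Complex

/-- `D(x) = ∑_{n=1}^∞ n² (n²πx − 3/2) exp(−n²πx)`. -/
noncomputable def Dker (x : ℝ) : ℝ :=
  ∑' n : ℕ, ((n : ℝ) + 1) ^ 2 * (((n : ℝ) + 1) ^ 2 * Real.pi * x - 3 / 2) *
    Real.exp (-((n : ℝ) + 1) ^ 2 * Real.pi * x)

/-- `S(ω) = 8π e^{5ω/2} D(e^{2ω})`. -/
noncomputable def Sker (ω : ℝ) : ℝ :=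
  8 * Real.pi * Real.exp (5 * ω / 2) * Dker (Real.exp (2 * ω))

namespace Stmt15

open Real Set Filter

/-- basic exponential term -/
noncomputable def E (n : ℕ) (x : ℝ) : ℝ := rexp (-π * ((n : ℝ) + 1) ^ 2 * x)

/-- weighted theta-type series -/
noncomputable def Psi (a : ℕ → ℝ) (x : ℝ) : ℝ := ∑' n : ℕ, a n * E n x

noncomputable def a₀ : ℕ → ℝ := fun _ => 1
noncomputable def a₁ : ℕ → ℝ := fun n => -(π * ((n : ℝ) + 1) ^ 2)
noncomputable def a₂ : ℕ → ℝ := fun n => (π * ((n : ℝ) + 1) ^ 2) ^ 2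

lemma E_pos (n : ℕ) (x : ℝ) : 0 < E n x := Real.exp_pos _

lemma E_mono (n : ℕ) {x y : ℝ} (hxy : x ≤ y) : E n y ≤ E n x := by
  apply Real.exp_le_exp.2
  have h1 : (0:ℝ) < π * ((n : ℝ) + 1) ^ 2 := by positivity
  nlinarith

lemma summable_poly_mul_E (k : ℕ) {x : ℝ} (hx : 0 < x) :
    Summable fun n : ℕ => ((n : ℝ) + 1) ^ k * E n x := by
  have hr0 : (0:ℝ) < rexp (-(π * x)) := Real.exp_pos _
  have hr : rexp (-(π * x)) < 1 := Real.exp_lt_one_iff.2 (neg_neg_iff_pos.2 (by positivity))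
  have h := summable_pow_mul_geometric_of_norm_lt_one (R := ℝ) k
      (r := rexp (-(π * x))) (by rwa [Real.norm_eq_abs, abs_of_pos hr0])
  have h2 : Summable fun n : ℕ => ((n : ℝ) + 1) ^ k * rexp (-(π * x)) ^ (n + 1) := by
    have := (summable_nat_add_iff 1).2 h
    refine this.congr fun n => ?_
    push_cast; ring
  refine h2.of_nonneg_of_le (fun n => mul_nonneg (by positivity) (E_pos n x).le) fun n => ?_
  have hE : E n x ≤ rexp (-(π * x)) ^ (n + 1) := by
    rw [← Real.exp_nat_mul]
    apply Real.exp_le_exp.2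
    have h1 : ((n:ℝ) + 1) ≤ ((n:ℝ) + 1) ^ 2 := by nlinarith [Nat.cast_nonneg (α := ℝ) n]
    have hπx : (0:ℝ) < π * x := by positivity
    push_cast
    nlinarith
  have : (0:ℝ) ≤ ((n : ℝ) + 1) ^ k := by positivity
  exact mul_le_mul_of_nonneg_left hE this

lemma summable_mul_E {a : ℕ → ℝ} {C : ℝ} {k : ℕ}
    (ha : ∀ n, |a n| ≤ C * ((n : ℝ) + 1) ^ k) {x : ℝ} (hx : 0 < x) :
    Summable fun n : ℕ => a n * E n x := by
  refine Summable.of_norm ?_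
  refine ((summable_poly_mul_E k hx).mul_left C).of_nonneg_of_le
    (fun n => norm_nonneg _) fun n => ?_
  rw [norm_mul, Real.norm_eq_abs, Real.norm_eq_abs, abs_of_pos (E_pos n x), ← mul_assoc]
  exact mul_le_mul_of_nonneg_right (ha n) (E_pos n x).le

lemma hasDerivAt_E (n : ℕ) (x : ℝ) :
    HasDerivAt (E n) ((-(π * ((n : ℝ) + 1) ^ 2)) * E n x) x := by
  have h1 : HasDerivAt (fun y : ℝ => -π * ((n : ℝ) + 1) ^ 2 * y)
      (-π * ((n : ℝ) + 1) ^ 2) x := by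
    have := HasDerivAt.const_mul (-π * ((n : ℝ) + 1) ^ 2) (hasDerivAt_id x)
    rwa [mul_one] at this
  have h2 := h1.exp
  exact h2.congr_deriv (by simp only [E]; ring)

lemma hasDerivAt_Psi {a : ℕ → ℝ} {C : ℝ} {k : ℕ}
    (ha : ∀ n, |a n| ≤ C * ((n : ℝ) + 1) ^ k) {x : ℝ} (hx : 0 < x) :
    HasDerivAt (Psi a) (Psi (fun n => a n * -(π * ((n : ℝ) + 1) ^ 2)) x) x := by
  have hC : 0 ≤ C := by
    have := (abs_nonneg (a 0)).trans (ha 0)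
    simpa using this
  have hx2 : 0 < x / 2 := half_pos hx
  have hsum : Summable fun n : ℕ => C * π * (((n : ℝ) + 1) ^ (k + 2) * E n (x / 2)) :=
    (summable_poly_mul_E (k + 2) hx2).mul_left _
  have key := hasDerivAt_tsum_of_isPreconnected hsum isOpen_Ioi isPreconnected_Ioi
    (t := Ioi (x / 2))
    (g := fun n y => a n * E n y)
    (g' := fun n y => a n * ((-(π * ((n : ℝ) + 1) ^ 2)) * E n y))
    (fun n y _ => (hasDerivAt_E n y).const_mul (a n))
    (fun n y hy => ?_) (mem_Ioi.2 (half_lt_self hx)) (summable_mul_E ha hx)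
    (mem_Ioi.2 (half_lt_self hx))
  · refine key.congr_deriv ?_
    refine tsum_congr fun n => ?_
    ring
  · rw [Real.norm_eq_abs, abs_mul, abs_mul, abs_neg,
      _root_.abs_of_pos (show (0:ℝ) < π * ((n:ℝ)+1)^2 by positivity),
      _root_.abs_of_pos (E_pos n y)]
    have hEy : E n y ≤ E n (x / 2) := E_mono n (le_of_lt (mem_Ioi.1 hy))
    calc |a n| * (π * ((n:ℝ)+1)^2 * E n y)
        ≤ C * ((n:ℝ)+1)^k * (π * ((n:ℝ)+1)^2 * E n (x/2)) := by
          refine mul_le_mul (ha n) ?_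
            (mul_nonneg (by positivity) (E_pos n y).le)
            (mul_nonneg hC (by positivity))
          exact mul_le_mul_of_nonneg_left hEy (by positivity)
      _ = C * π * (((n:ℝ)+1)^(k+2) * E n (x/2)) := by ring

lemma ha₀ : ∀ n : ℕ, |a₀ n| ≤ 1 * ((n : ℝ) + 1) ^ 0 := fun n => by simp [a₀]

lemma ha₁ : ∀ n : ℕ, |a₁ n| ≤ π * ((n : ℝ) + 1) ^ 2 := fun n => by
  have : (0:ℝ) ≤ π * ((n:ℝ)+1)^2 := by positivity
  simp [a₁, _root_.abs_of_nonneg this]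

lemma ha₂ : ∀ n : ℕ, |a₂ n| ≤ π ^ 2 * ((n : ℝ) + 1) ^ 4 := fun n => by
  have : (0:ℝ) ≤ (π * ((n:ℝ)+1)^2)^2 := by positivity
  rw [a₂, _root_.abs_of_nonneg this]
  ring_nf
  exact le_refl _

lemma hasDerivAt_psi0 {x : ℝ} (hx : 0 < x) : HasDerivAt (Psi a₀) (Psi a₁ x) x := by
  have := hasDerivAt_Psi ha₀ hx
  refine this.congr_deriv ?_
  refine tsum_congr fun n => ?_
  simp [a₀, a₁]

lemma hasDerivAt_psi1 {x : ℝ} (hx : 0 < x) : HasDerivAt (Psi a₁) (Psi a₂ x) x := by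
  have := hasDerivAt_Psi ha₁ hx
  refine this.congr_deriv ?_
  refine tsum_congr fun n => ?_
  simp only [a₁, a₂]
  ring

lemma Dker_eq {x : ℝ} (hx : 0 < x) :
    Dker x = x / π * Psi a₂ x + 3 / (2 * π) * Psi a₁ x := by
  have h1 : ∀ n : ℕ, ((n : ℝ) + 1) ^ 2 * (((n : ℝ) + 1) ^ 2 * π * x - 3 / 2) *
      rexp (-((n : ℝ) + 1) ^ 2 * π * x)
      = x / π * (a₂ n * E n x) + 3 / (2 * π) * (a₁ n * E n x) := by
    intro n
    have hexp : rexp (-((n : ℝ) + 1) ^ 2 * π * x) = E n x := by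
      simp only [E]; congr 1; ring
    rw [hexp]
    simp only [a₁, a₂]
    have hπ : π ≠ 0 := pi_ne_zero
    field_simp
    ring
  rw [Dker, tsum_congr h1,
    Summable.tsum_add ((summable_mul_E ha₂ hx).mul_left _) ((summable_mul_E ha₁ hx).mul_left _),
    tsum_mul_left, tsum_mul_left]
  rfl

lemma cosKernel_eq {x : ℝ} (hx : 0 < x) :
    HurwitzZeta.cosKernel 0 x = 2 * Psi a₀ x + 1 := by
  have h := HurwitzZeta.hasSum_nat_cosKernel₀ 0 hx
  have hfun : (fun n : ℕ => 2 * Real.cos (2 * π * 0 * ((n : ℝ) + 1)) *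
      rexp (-π * ((n : ℝ) + 1) ^ 2 * x)) = fun n : ℕ => 2 * (a₀ n * E n x) := by
    funext n; simp [a₀, E]
  rw [hfun] at h
  have h2 : HasSum (fun n : ℕ => 2 * (a₀ n * E n x)) (2 * Psi a₀ x) :=
    (summable_mul_E ha₀ hx).hasSum.mul_left 2
  have h3 := h2.unique h
  have hcast : ((0 : ℝ) : UnitAddCircle) = 0 := by norm_num
  rw [hcast] at h3
  linarith

lemma psi_one_div {x : ℝ} (hx : 0 < x) :
    2 * Psi a₀ (1 / x) + 1 = Real.sqrt x * (2 * Psi a₀ x + 1) := by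
  have h := HurwitzZeta.evenKernel_functional_equation 0 x
  rw [HurwitzZeta.evenKernel_eq_cosKernel_of_zero] at h
  rw [cosKernel_eq hx, cosKernel_eq (by positivity : (0:ℝ) < 1 / x)] at h
  rw [← Real.sqrt_eq_rpow] at h
  have hs : (0:ℝ) < Real.sqrt x := Real.sqrt_pos.2 hx
  field_simp at h
  linarith

lemma eq_deriv_on_Ioi {f g : ℝ → ℝ} {a b x : ℝ} (hx : 0 < x)
    (heq : ∀ y ∈ Ioi (0:ℝ), f y = g y)
    (hf : HasDerivAt f a x) (hg : HasDerivAt g b x) : a = b := by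
  have hmem : Ioi (0:ℝ) ∈ nhds x := isOpen_Ioi.mem_nhds hx
  have hev : g =ᶠ[nhds x] f := by
    filter_upwards [hmem] with y hy
    exact (heq y hy).symm
  exact (hf.congr_of_eventuallyEq hev).unique hg

lemma hasDerivAt_comp_inv {x : ℝ} (hx : 0 < x) {F : ℝ → ℝ} {F' : ℝ → ℝ}
    (hF : ∀ {y : ℝ}, 0 < y → HasDerivAt F (F' y) y) :
    HasDerivAt (fun y => F (1 / y)) (F' (1 / x) * -(x ^ 2)⁻¹) x := by
  have h1 : HasDerivAt (fun y : ℝ => 1 / y) (-(x ^ 2)⁻¹) x := by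
    simpa [one_div] using hasDerivAt_inv hx.ne'
  exact (hF (by positivity)).comp x h1

lemma eq1 {x : ℝ} (hx : 0 < x) :
    Psi a₁ (1 / x) =
      -(x * Real.sqrt x * (2 * Psi a₀ x + 1) / 4 + x ^ 2 * Real.sqrt x * Psi a₁ x) := by
  set s := Real.sqrt x with hs
  have hs0 : 0 < s := Real.sqrt_pos.2 hx
  have hss : s ^ 2 = x := Real.sq_sqrt hx.le
  have hL : HasDerivAt (fun y => Psi a₀ (1 / y)) (Psi a₁ (1 / x) * -(x ^ 2)⁻¹) x :=
    hasDerivAt_comp_inv hx (fun hy => hasDerivAt_psi0 hy)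
  have hsq : HasDerivAt Real.sqrt (1 / (2 * s)) x := Real.hasDerivAt_sqrt hx.ne'
  have hψ : HasDerivAt (Psi a₀) (Psi a₁ x) x := hasDerivAt_psi0 hx
  have hA : HasDerivAt (fun y => 2 * Psi a₀ y + 1) (2 * Psi a₁ x) x :=
    (hψ.const_mul 2).add_const 1
  have hR : HasDerivAt (fun y => (Real.sqrt y * (2 * Psi a₀ y + 1) - 1) / 2)
      ((1 / (2 * s) * (2 * Psi a₀ x + 1) + s * (2 * Psi a₁ x)) / 2) x :=
    ((hsq.mul hA).sub_const 1).div_const 2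
  have heq : ∀ y ∈ Ioi (0:ℝ),
      Psi a₀ (1 / y) = (Real.sqrt y * (2 * Psi a₀ y + 1) - 1) / 2 := by
    intro y hy
    have := psi_one_div (mem_Ioi.1 hy)
    linarith
  have hkey := eq_deriv_on_Ioi hx heq hL hR
  rw [← hss] at hkey ⊢
  field_simp at hkey
  refine mul_left_cancel₀ (show (4:ℝ) * s ≠ 0 by positivity) ?_
  linear_combination (-s) * hkey

lemma eq2 {x : ℝ} (hx : 0 < x) :
    Psi a₂ (1 / x) =
      3 / 8 * (x ^ 2 * Real.sqrt x) * (2 * Psi a₀ x + 1)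
        + 3 * (x ^ 3 * Real.sqrt x) * Psi a₁ x + x ^ 4 * Real.sqrt x * Psi a₂ x := by
  set s := Real.sqrt x with hs
  have hs0 : 0 < s := Real.sqrt_pos.2 hx
  have hss : s ^ 2 = x := Real.sq_sqrt hx.le
  have hL : HasDerivAt (fun y => Psi a₁ (1 / y)) (Psi a₂ (1 / x) * -(x ^ 2)⁻¹) x :=
    hasDerivAt_comp_inv hx (fun hy => hasDerivAt_psi1 hy)
  have hsq : HasDerivAt Real.sqrt (1 / (2 * s)) x := Real.hasDerivAt_sqrt hx.ne'
  have hψ : HasDerivAt (Psi a₀) (Psi a₁ x) x := hasDerivAt_psi0 hx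
  have hψ1 : HasDerivAt (Psi a₁) (Psi a₂ x) x := hasDerivAt_psi1 hx
  have hA : HasDerivAt (fun y => 2 * Psi a₀ y + 1) (2 * Psi a₁ x) x :=
    (hψ.const_mul 2).add_const 1
  have ht1 : HasDerivAt (fun y : ℝ => y * Real.sqrt y) (1 * s + x * (1 / (2 * s))) x :=
    (hasDerivAt_id x).mul hsq
  have ht3 : HasDerivAt (fun y : ℝ => y ^ 2) (2 * x) x := by
    simpa using hasDerivAt_pow 2 x
  have ht4 : HasDerivAt (fun y : ℝ => y ^ 2 * Real.sqrt y)
      (2 * x * s + x ^ 2 * (1 / (2 * s))) x := ht3.mul hsq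
  have hG : HasDerivAt
      (fun y => -(y * Real.sqrt y * (2 * Psi a₀ y + 1) / 4 + y ^ 2 * Real.sqrt y * Psi a₁ y))
      (-(((1 * s + x * (1 / (2 * s))) * (2 * Psi a₀ x + 1) + x * s * (2 * Psi a₁ x)) / 4
        + ((2 * x * s + x ^ 2 * (1 / (2 * s))) * Psi a₁ x + x ^ 2 * s * Psi a₂ x))) x :=
    (((ht1.mul hA).div_const 4).add (ht4.mul hψ1)).neg
  have heq : ∀ y ∈ Ioi (0:ℝ),
      Psi a₁ (1 / y)
        = -(y * Real.sqrt y * (2 * Psi a₀ y + 1) / 4 + y ^ 2 * Real.sqrt y * Psi a₁ y) :=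
    fun y hy => eq1 (mem_Ioi.1 hy)
  have hkey := eq_deriv_on_Ioi hx heq hL hG
  rw [← hss] at hkey ⊢
  field_simp at hkey
  refine mul_left_cancel₀ (show (16:ℝ) * s ^ 2 ≠ 0 by positivity) ?_
  linear_combination (-2 * s ^ 2) * hkey

lemma Dker_inv {x : ℝ} (hx : 0 < x) :
    Dker (1 / x) = x ^ 2 * Real.sqrt x * Dker x := by
  rw [Dker_eq (by positivity : (0:ℝ) < 1 / x), Dker_eq hx, eq1 hx, eq2 hx]
  have hπ : π ≠ 0 := pi_ne_zero
  have hx0 : x ≠ 0 := hx.ne'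
  field_simp
  ring

end Stmt15

theorem stmt_15 : ∀ ω : ℝ, Sker (-ω) = Sker ω := by
  intro ω
  have hx : 0 < Real.exp (2 * ω) := Real.exp_pos _
  have hinv : Real.exp (2 * -ω) = 1 / Real.exp (2 * ω) := by
    rw [one_div, ← Real.exp_neg]
    congr 1
    ring
  have hsqrt : Real.sqrt (Real.exp (2 * ω)) = Real.exp ω := by
    rw [show (2:ℝ) * ω = ω + ω by ring, Real.exp_add,
      Real.sqrt_mul_self (Real.exp_pos ω).le]
  unfold Sker
  rw [hinv, Stmt15.Dker_inv hx, hsqrt]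
  have hexp : Real.exp (5 * -ω / 2) * (Real.exp (2 * ω) ^ 2 * Real.exp ω)
      = Real.exp (5 * ω / 2) := by
    rw [pow_two, ← Real.exp_add, ← Real.exp_add, ← Real.exp_add]
    congr 1
    ring
  linear_combination 8 * Real.pi * Dker (Real.exp (2 * ω)) * hexp
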